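/- For any fixed reals a < b, the function f : ℝ → ℝ defined by f(x) = log( Φ(b−x) − Φ(a−x) ) is concave on ℝ (note Φ(b−x) − Φ(a−x) > 0 for every x, so f is well defined). -/

import Mathlib

open MeasureTheory Real Filter

/-- Standard Gaussian density. -/
noncomputable def phi (x : ℝ) : ℝ := (Real.sqrt (2 * Real.pi))⁻¹ * Real.exp (-(x ^ 2) / 2)

/-- Standard Gaussian cumulative distribution function. -/
noncomputable def Phi (x : ℝ) : ℝ := ∫ t in Set.Iic x, phi t

lemma phi_pos (x : ℝ) : 0 < phi x :=
  mul_pos (inv_pos.2 (Real.sqrt_pos.2 (by positivity))) (Real.exp_pos _)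

lemma continuous_phi : Continuous phi := by
  unfold phi; fun_prop

lemma hasDerivAt_phi (x : ℝ) : HasDerivAt phi (-x * phi x) x := by
  have h : HasDerivAt (fun y : ℝ => -(y ^ 2) / 2) (-x) x := by
    have := ((hasDerivAt_pow 2 x).neg).div_const 2
    exact this.congr_deriv (by ring)
  have h2 := (h.exp).const_mul (Real.sqrt (2 * Real.pi))⁻¹
  unfold phi
  exact h2.congr_deriv (by ring)

lemma integrable_phi : Integrable phi := by
  have h : Integrable (fun x : ℝ => Real.exp (-(1/2 : ℝ) * x ^ 2)) :=
    integrable_exp_neg_mul_sq (by norm_num)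
  have := h.const_mul (Real.sqrt (2 * Real.pi))⁻¹
  refine this.congr (Eventually.of_forall fun x => ?_)
  unfold phi
  ring_nf

lemma Phi_sub (x y : ℝ) : Phi y - Phi x = ∫ t in x..y, phi t :=
  intervalIntegral.integral_Iic_sub_Iic integrable_phi.integrableOn integrable_phi.integrableOn

lemma hasDerivAt_Phi (x : ℝ) : HasDerivAt Phi (phi x) x := by
  have key : ∀ y, Phi y = Phi 0 + ∫ t in (0:ℝ)..y, phi t := by
    intro y
    rw [← Phi_sub 0 y]; ring
  have hd : HasDerivAt (fun y => Phi 0 + ∫ t in (0:ℝ)..y, phi t) (phi x) x := by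
    refine HasDerivAt.const_add _ ?_
    refine intervalIntegral.integral_hasDerivAt_right
      (continuous_phi.intervalIntegrable _ _)
      (continuous_phi.stronglyMeasurableAtFilter _ _)
      continuous_phi.continuousAt
  exact hd.congr_of_eventuallyEq (Eventually.of_forall key)

/-- Key inequality: variance of the truncated Gaussian is at most 1. -/
lemma key_ineq (u v : ℝ) (huv : u < v) :
    (∫ t in u..v, phi t) * (u * phi u - v * phi v) ≤ (phi u - phi v) ^ 2 := by
  set Z : ℝ := ∫ t in u..v, phi t with hZ
  have hZpos : 0 < Z := by
    rw [hZ]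
    apply intervalIntegral.intervalIntegral_pos_of_pos
      (continuous_phi.intervalIntegrable u v) (fun t => phi_pos t) huv
  -- ∫ t·φ(t) = φ(u) − φ(v)
  have hM : (∫ t in u..v, t * phi t) = phi u - phi v := by
    have : ∀ t ∈ Set.uIcc u v, HasDerivAt (fun s => -phi s) (t * phi t) t := by
      intro t _
      have := (hasDerivAt_phi t).neg
      exact this.congr_deriv (by ring)
    rw [intervalIntegral.integral_eq_sub_of_hasDerivAt this
      (((show Continuous fun t : ℝ => t * phi t from continuous_id'.mul continuous_phi).intervalIntegrable u v))]
    ring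
  -- ∫ (t²−1)·φ(t) = u·φ(u) − v·φ(v)
  have hS : (∫ t in u..v, (t ^ 2 - 1) * phi t) = u * phi u - v * phi v := by
    have : ∀ t ∈ Set.uIcc u v, HasDerivAt (fun s => -s * phi s) ((t ^ 2 - 1) * phi t) t := by
      intro t _
      have := ((hasDerivAt_id t).neg.mul (hasDerivAt_phi t))
      exact this.congr_deriv (by simp only [Pi.neg_apply, id]; ring)
    rw [intervalIntegral.integral_eq_sub_of_hasDerivAt this
      (((continuous_pow 2).sub continuous_const).mul continuous_phi |>.intervalIntegrable u v)]
    ring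
  set m : ℝ := (phi u - phi v) / Z with hm
  -- u ≤ m ≤ v
  have hmu : u * Z ≤ phi u - phi v := by
    rw [← hM, ← intervalIntegral.integral_const_mul]
    apply intervalIntegral.integral_mono_on huv.le
      ((continuous_const.mul continuous_phi).intervalIntegrable u v)
      (((show Continuous fun t : ℝ => t * phi t from continuous_id'.mul continuous_phi).intervalIntegrable u v))
    intro t ht
    exact mul_le_mul_of_nonneg_right ht.1 (phi_pos t).le
  have hmv : phi u - phi v ≤ v * Z := by
    rw [← hM, ← intervalIntegral.integral_const_mul]
    apply intervalIntegral.integral_mono_on huv.le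
      (((show Continuous fun t : ℝ => t * phi t from continuous_id'.mul continuous_phi).intervalIntegrable u v))
      ((continuous_const.mul continuous_phi).intervalIntegrable u v)
    intro t ht
    exact mul_le_mul_of_nonneg_right ht.2 (phi_pos t).le
  have hum : u ≤ m := by
    rw [hm, le_div_iff₀ hZpos]; linarith [hmu]
  have hmv' : m ≤ v := by
    rw [hm, div_le_iff₀ hZpos]; linarith [hmv]
  -- ∫ ((t−m)t − 1)·φ(t) = (u−m)φ(u) − (v−m)φ(v) ≤ 0
  have hT : (∫ t in u..v, ((t - m) * t - 1) * phi t)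
      = (u - m) * phi u - (v - m) * phi v := by
    have : ∀ t ∈ Set.uIcc u v,
        HasDerivAt (fun s => -(s - m) * phi s) (((t - m) * t - 1) * phi t) t := by
      intro t _
      have := (((hasDerivAt_id t).sub_const m).neg.mul (hasDerivAt_phi t))
      simp only [id_eq] at this
      exact this.congr_deriv (by simp only [Pi.neg_apply]; ring)
    rw [intervalIntegral.integral_eq_sub_of_hasDerivAt this
      ((((continuous_id.sub continuous_const).mul continuous_id).sub
        continuous_const).mul continuous_phi |>.intervalIntegrable u v)]
    ring
  have hTle : (∫ t in u..v, ((t - m) * t - 1) * phi t) ≤ 0 := by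
    rw [hT]
    have h1 : (u - m) * phi u ≤ 0 := mul_nonpos_of_nonpos_of_nonneg (by linarith) (phi_pos u).le
    have h2 : 0 ≤ (v - m) * phi v := mul_nonneg (by linarith) (phi_pos v).le
    linarith
  -- split the integral
  have hsplit : (∫ t in u..v, ((t - m) * t - 1) * phi t)
      = (∫ t in u..v, (t ^ 2 - 1) * phi t) - m * ∫ t in u..v, t * phi t := by
    rw [← intervalIntegral.integral_const_mul, ← intervalIntegral.integral_sub
      ((show Continuous fun t : ℝ => (t ^ 2 - 1) * phi t from ((continuous_pow 2).sub continuous_const).mul continuous_phi).intervalIntegrable u v)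
      (((show Continuous fun t : ℝ => m * (t * phi t) from continuous_const.mul (continuous_id'.mul continuous_phi)).intervalIntegrable u v))]
    apply intervalIntegral.integral_congr
    intro t _
    ring
  have hfinal : u * phi u - v * phi v ≤ m * (phi u - phi v) := by
    rw [hsplit, hS, hM] at hTle
    linarith
  calc Z * (u * phi u - v * phi v) ≤ Z * (m * (phi u - phi v)) :=
        mul_le_mul_of_nonneg_left hfinal hZpos.le
    _ = (phi u - phi v) ^ 2 := by
        rw [hm]; field_simp

/-- The function `x ↦ log(Φ(b−x) − Φ(a−x))` is concave on `ℝ`. -/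
theorem log_Phi_diff_concave (a b : ℝ) (hab : a < b) :
    ConcaveOn ℝ Set.univ (fun x : ℝ => Real.log (Phi (b - x) - Phi (a - x))) := by
  set F : ℝ → ℝ := fun x => Phi (b - x) - Phi (a - x) with hF
  set f1 : ℝ → ℝ := fun x => phi (a - x) - phi (b - x) with hf1
  set f2 : ℝ → ℝ := fun x => (a - x) * phi (a - x) - (b - x) * phi (b - x) with hf2
  have hFpos : ∀ x, 0 < F x := by
    intro x
    rw [hF]
    simp only
    rw [Phi_sub]
    exact intervalIntegral.intervalIntegral_pos_of_pos
      (continuous_phi.intervalIntegrable _ _) (fun t => phi_pos t) (by linarith)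
  have hFderiv : ∀ x, HasDerivAt F (f1 x) x := by
    intro x
    have h1 : HasDerivAt (fun x => Phi (b - x)) (-phi (b - x)) x := by
      have := (hasDerivAt_Phi (b - x)).comp x ((hasDerivAt_const x b).sub (hasDerivAt_id x))
      exact this.congr_deriv (by ring)
    have h2 : HasDerivAt (fun x => Phi (a - x)) (-phi (a - x)) x := by
      have := (hasDerivAt_Phi (a - x)).comp x ((hasDerivAt_const x a).sub (hasDerivAt_id x))
      exact this.congr_deriv (by ring)
    have := h1.sub h2
    exact this.congr_deriv (by rw [hf1]; ring)
  have hf1deriv : ∀ x, HasDerivAt f1 (f2 x) x := by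
    intro x
    have h1 : HasDerivAt (fun x => phi (a - x)) ((a - x) * phi (a - x)) x := by
      have := (hasDerivAt_phi (a - x)).comp x ((hasDerivAt_const x a).sub (hasDerivAt_id x))
      exact this.congr_deriv (by ring)
    have h2 : HasDerivAt (fun x => phi (b - x)) ((b - x) * phi (b - x)) x := by
      have := (hasDerivAt_phi (b - x)).comp x ((hasDerivAt_const x b).sub (hasDerivAt_id x))
      exact this.congr_deriv (by ring)
    exact h1.sub h2
  have hgderiv : ∀ x, HasDerivAt (fun x => Real.log (F x)) (f1 x / F x) x := by
    intro x
    exact (hFderiv x).log (hFpos x).ne'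
  have hg2deriv : ∀ x, HasDerivAt (fun x => f1 x / F x)
      ((f2 x * F x - f1 x * f1 x) / (F x) ^ 2) x := by
    intro x
    exact (hf1deriv x).div (hFderiv x) (hFpos x).ne'
  have hnonpos : ∀ x, (f2 x * F x - f1 x * f1 x) / (F x) ^ 2 ≤ 0 := by
    intro x
    apply div_nonpos_of_nonpos_of_nonneg _ (sq_nonneg _)
    have hkey := key_ineq (a - x) (b - x) (by linarith)
    have hFx : F x = ∫ t in (a - x)..(b - x), phi t := by
      rw [hF]; simp only; rw [Phi_sub]
    rw [hf1, hf2]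
    simp only
    rw [hFx]
    nlinarith [hkey]
  refine concaveOn_of_hasDerivWithinAt2_nonpos convex_univ
    (f' := fun x => f1 x / F x)
    (f'' := fun x => (f2 x * F x - f1 x * f1 x) / (F x) ^ 2)
    ?_ ?_ ?_ ?_
  · exact fun x _ => ((hgderiv x).continuousAt).continuousWithinAt
  · exact fun x _ => (hgderiv x).hasDerivWithinAt
  · exact fun x _ => (hg2deriv x).hasDerivWithinAt
  · exact fun x _ => hnonpos x
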